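/- Let 𝕆 denote the octonions and let a, b, c be unitary purely imaginary octonions with (c·b)·a purely imaginary. Then the element g_{abc} = −l_{(c·b)·a} ∘ l_a ∘ l_b ∘ l_c satisfies g_{abc}(1) = 1, i.e. ((c·b)·a)·(a·(b·c)) = −1. -/

import Mathlib

noncomputable section

/-- The octonions, realized as pairs of quaternions. -/
abbrev Octonion := Quaternion ℝ × Quaternion ℝ

/-- Octonion multiplication: (α₁,α₂)·(β₁,β₂) = (α₁β₁ − β̄₂α₂, β₂α₁ + α₂β̄₁). -/
def omul (a b : Octonion) : Octonion :=
  (a.1 * b.1 - star b.2 * a.2, b.2 * a.1 + a.2 * star b.1)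

/-- Octonion conjugation: (α₁,α₂)* = (ᾱ₁, −α₂). -/
def oconj (a : Octonion) : Octonion := (star a.1, -a.2)

/-- The unit octonion 1 = (1,0). -/
def oone : Octonion := ((1 : Quaternion ℝ), (0 : Quaternion ℝ))

/-- An octonion is purely imaginary if a + a* = 0. -/
def IsPurelyImaginary (a : Octonion) : Prop := a + oconj a = 0

/-- The squared Euclidean norm ‖(α₁,α₂)‖² = ‖α₁‖² + ‖α₂‖². -/
def onormSq (a : Octonion) : ℝ := ‖a.1‖ ^ 2 + ‖a.2‖ ^ 2

/-- The Euclidean norm of an octonion. -/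
def onorm (a : Octonion) : ℝ := Real.sqrt (onormSq a)

/-- An octonion is unitary if its Euclidean norm equals 1. -/
def IsUnitary (a : Octonion) : Prop := onorm a = 1

open Quaternion in
lemma onormSq_omul (x y : Octonion) : onormSq (omul x y) = onormSq x * onormSq y := by
  have h : ∀ q : Quaternion ℝ, ‖q‖ ^ 2 = normSq q := by
    intro q; rw [sq, ← normSq_eq_norm_mul_self]
  simp only [onormSq, omul, h]
  simp only [normSq_def', Quaternion.re_mul, Quaternion.imI_mul, Quaternion.imJ_mul,
    Quaternion.imK_mul, Quaternion.re_sub, Quaternion.imI_sub, Quaternion.imJ_sub,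
    Quaternion.imK_sub, Quaternion.re_add, Quaternion.imI_add, Quaternion.imJ_add,
    Quaternion.imK_add, Quaternion.re_star, Quaternion.imI_star, Quaternion.imJ_star,
    Quaternion.imK_star]
  ring

lemma onormSq_nonneg (x : Octonion) : 0 ≤ onormSq x :=
  add_nonneg (by positivity) (by positivity)

lemma onormSq_eq_one (x : Octonion) (hx : IsUnitary x) : onormSq x = 1 := by
  have := hx
  unfold IsUnitary onorm at this
  nlinarith [Real.sq_sqrt (onormSq_nonneg x), onormSq_nonneg x]

lemma oconj_omul (x y : Octonion) : oconj (omul x y) = omul (oconj y) (oconj x) := by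
  unfold oconj omul
  refine Prod.ext ?_ ?_ <;> simp [StarMul.star_mul]

lemma omul_neg_left (x y : Octonion) : omul (-x) y = -omul x y := by
  unfold omul
  refine Prod.ext ?_ ?_ <;> simp <;> abel

lemma omul_neg_right (x y : Octonion) : omul x (-y) = -omul x y := by
  unfold omul
  refine Prod.ext ?_ ?_ <;> simp <;> abel

lemma oconj_eq_neg (x : Octonion) (hx : IsPurelyImaginary x) : oconj x = -x := by
  exact eq_neg_of_add_eq_zero_left (add_comm x (oconj x) ▸ hx)

open Quaternion in
lemma omul_self (x : Octonion) (hx : IsPurelyImaginary x) (hx1 : onormSq x = 1) :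
    omul x x = -oone := by
  have h1 : star x.1 = -x.1 := by
    have := congrArg Prod.fst hx
    simpa [oconj, IsPurelyImaginary, eq_neg_iff_add_eq_zero, add_comm] using this
  have hn : ∀ q : Quaternion ℝ, ‖q‖ ^ 2 = normSq q := by
    intro q; rw [sq, ← normSq_eq_norm_mul_self]
  have hsq : onormSq x = normSq x.1 + normSq x.2 := by simp [onormSq, hn]
  have hone : -oone = ((-1 : Quaternion ℝ), (0 : Quaternion ℝ)) := by
    refine Prod.ext ?_ ?_ <;> simp [oone]
  rw [hone]
  unfold omul
  refine Prod.ext ?_ ?_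
  · show x.1 * x.1 - star x.2 * x.2 = -1
    have h2 : x.1 * x.1 = -((Quaternion.normSq x.1 : ℝ) : Quaternion ℝ) := by
      rw [← self_mul_star, h1, mul_neg, neg_neg]
    rw [h2, star_mul_self]
    rw [hsq] at hx1
    rw [show (-1 : Quaternion ℝ) = -((1 : ℝ) : Quaternion ℝ) by norm_cast, ← hx1]
    push_cast
    abel
  · show x.2 * x.1 + x.2 * star x.1 = 0
    rw [h1, mul_neg]
    abel

/-- For unitary purely imaginary octonions a, b, c with (c·b)·a purely
imaginary, the element g_{abc} = −l_{(c·b)·a} ∘ l_a ∘ l_b ∘ l_c fixes 1,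
i.e. ((c·b)·a)·(a·(b·c)) = −1. -/
theorem g_abc_fixes_one (a b c : Octonion)
    (ha : IsUnitary a) (ha' : IsPurelyImaginary a)
    (hb : IsUnitary b) (hb' : IsPurelyImaginary b)
    (hc : IsUnitary c) (hc' : IsPurelyImaginary c)
    (hcba : IsPurelyImaginary (omul (omul c b) a)) :
    omul (omul (omul c b) a) (omul a (omul b c)) = -oone := by
  set u := omul c b with hu
  have hkey : omul a (omul b c) = omul u a := by
    have h1 : oconj (omul u a) = -(omul u a) := oconj_eq_neg _ hcba
    have h2 : oconj u = omul b c := by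
      rw [hu, oconj_omul, oconj_eq_neg b hb', oconj_eq_neg c hc', omul_neg_left,
        omul_neg_right, neg_neg]
    have h3 : oconj (omul u a) = omul (oconj a) (oconj u) := oconj_omul u a
    rw [h2, oconj_eq_neg a ha', omul_neg_left] at h3
    rw [h1] at h3
    exact (neg_injective h3.symm)
  rw [hkey]
  apply omul_self _ hcba
  rw [onormSq_omul, hu, onormSq_omul, onormSq_eq_one a ha, onormSq_eq_one b hb,
    onormSq_eq_one c hc]
  ring
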